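/- Let Q* minimize I_Q(T:X|Y) over Δ_P, and let (t,x,y) ∈ supp(Δ_P). If Q*(t,x,y) = 0, then the marginal Q*(x,y) = 0, and hence Q*(t',x,y) = 0 for all t' ∈ 𝒯. -/

import Mathlib

open scoped BigOperators
noncomputable section

variable {T X Y : Type*}

/-- A joint probability distribution of `(T,X,Y)`, as a function `T → X → Y → ℝ`. -/
def IsDist [Fintype T] [Fintype X] [Fintype Y] (P : T → X → Y → ℝ) : Prop :=
  (∀ t x y, 0 ≤ P t x y) ∧ ∑ t, ∑ x, ∑ y, P t x y = 1

/-- The `(T,X)`-marginal. -/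
def margTX [Fintype Y] (P : T → X → Y → ℝ) (t : T) (x : X) : ℝ := ∑ y, P t x y

/-- The `(T,Y)`-marginal. -/
def margTY [Fintype X] (P : T → X → Y → ℝ) (t : T) (y : Y) : ℝ := ∑ x, P t x y

/-- The `(X,Y)`-marginal. -/
def margXY [Fintype T] (P : T → X → Y → ℝ) (x : X) (y : Y) : ℝ := ∑ t, P t x y

/-- The `T`-marginal. -/
def margT [Fintype X] [Fintype Y] (P : T → X → Y → ℝ) (t : T) : ℝ := ∑ x, ∑ y, P t x y

/-- The `Y`-marginal. -/
def margY [Fintype T] [Fintype X] (P : T → X → Y → ℝ) (y : Y) : ℝ := ∑ t, ∑ x, P t x y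

/-- `Δ_P`: the polytope of joint distributions with the same `(T,X)`- and
`(T,Y)`-marginals as `P`. -/
def deltaP [Fintype T] [Fintype X] [Fintype Y] (P : T → X → Y → ℝ) :
    Set (T → X → Y → ℝ) :=
  {Q | IsDist Q ∧ (∀ t x, margTX Q t x = margTX P t x) ∧
    (∀ t y, margTY Q t y = margTY P t y)}

/-- The conditional entropy `H_Q(T|X,Y)` (with the convention `0 log 0 = 0`,
automatic since `Real.log 0 = 0`). -/
def condEntTXY [Fintype T] [Fintype X] [Fintype Y] (Q : T → X → Y → ℝ) : ℝ :=
  ∑ t, ∑ x, ∑ y, -(Q t x y * Real.log (Q t x y / margXY Q x y))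

/-- The conditional mutual information `I_Q(T:X|Y)`. -/
def CMI [Fintype T] [Fintype X] [Fintype Y] (Q : T → X → Y → ℝ) : ℝ :=
  ∑ t, ∑ x, ∑ y,
    Q t x y * Real.log (Q t x y * margY Q y / (margTY Q t y * margXY Q x y))

private lemma CMI_eq' [Fintype T] [Fintype X] [Fintype Y] (P R : T → X → Y → ℝ)
    (hR : R ∈ deltaP P) :
    CMI R = ((∑ t, ∑ x, ∑ y, R t x y * Real.log (R t x y))
      - ∑ x, ∑ y, margXY R x y * Real.log (margXY R x y))
      + ((∑ y', (∑ t', margTY P t' y') * Real.log (∑ t', margTY P t' y'))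
         - ∑ t', ∑ y', margTY P t' y' * Real.log (margTY P t' y')) := by
  obtain ⟨⟨hnn, -⟩, -, hTY⟩ := hR
  have key : ∀ t x y, R t x y * Real.log (R t x y * margY R y / (margTY R t y * margXY R x y))
      = R t x y * Real.log (R t x y) + R t x y * Real.log (margY R y)
        - R t x y * Real.log (margTY R t y) - R t x y * Real.log (margXY R x y) := by
    intro t x y
    rcases eq_or_ne (R t x y) 0 with h | h
    · simp [h]
    · have hpos : 0 < R t x y := lt_of_le_of_ne (hnn t x y) (Ne.symm h)
      have hXY : 0 < margXY R x y :=
        lt_of_lt_of_le hpos (Finset.single_le_sum (fun i _ => hnn i x y) (Finset.mem_univ t))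
      have hTYp : 0 < margTY R t y :=
        lt_of_lt_of_le hpos (Finset.single_le_sum (fun i _ => hnn t i y) (Finset.mem_univ x))
      have hY : 0 < margY R y := by
        refine lt_of_lt_of_le hTYp ?_
        exact Finset.single_le_sum
          (fun i _ => Finset.sum_nonneg fun j _ => hnn i j y) (Finset.mem_univ t)
      rw [Real.log_div (by positivity) (by positivity), Real.log_mul hpos.ne' hY.ne',
        Real.log_mul hTYp.ne' hXY.ne']
      ring
  have hXYs : (∑ t, ∑ x, ∑ y, R t x y * Real.log (margXY R x y))
      = ∑ x, ∑ y, margXY R x y * Real.log (margXY R x y) := by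
    rw [Finset.sum_comm]
    refine Finset.sum_congr rfl fun x _ => ?_
    rw [Finset.sum_comm]
    refine Finset.sum_congr rfl fun y _ => ?_
    rw [margXY, Finset.sum_mul]
  have hTYs : (∑ t, ∑ x, ∑ y, R t x y * Real.log (margTY R t y))
      = ∑ t, ∑ y, margTY R t y * Real.log (margTY R t y) := by
    refine Finset.sum_congr rfl fun t _ => ?_
    rw [Finset.sum_comm]
    refine Finset.sum_congr rfl fun y _ => ?_
    rw [margTY, Finset.sum_mul]
  have hYs : (∑ t, ∑ x, ∑ y, R t x y * Real.log (margY R y))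
      = ∑ y, margY R y * Real.log (margY R y) := by
    have h1 : ∀ t : T, (∑ x, ∑ y, R t x y * Real.log (margY R y))
        = ∑ y, ∑ x, R t x y * Real.log (margY R y) := fun t => Finset.sum_comm
    simp_rw [h1]
    rw [Finset.sum_comm]
    refine Finset.sum_congr rfl fun y _ => ?_
    rw [margY, Finset.sum_mul]
    refine Finset.sum_congr rfl fun t _ => ?_
    rw [Finset.sum_mul]
  have e1 : CMI R = (∑ t, ∑ x, ∑ y, R t x y * Real.log (R t x y))
      + (∑ y, margY R y * Real.log (margY R y))
      - (∑ t, ∑ y, margTY R t y * Real.log (margTY R t y))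
      - (∑ x, ∑ y, margXY R x y * Real.log (margXY R x y)) := by
    unfold CMI
    simp only [key, Finset.sum_sub_distrib, Finset.sum_add_distrib]
    rw [hYs, hTYs, hXYs]
  have hmY : ∀ y, margY R y = ∑ t', margTY P t' y := by
    intro y; rw [margY]; exact Finset.sum_congr rfl fun t' _ => hTY t' y
  rw [e1]
  simp only [hmY, hTY]
  ring

private lemma phi_cvx {a b l : ℝ} (ha : 0 ≤ a) (hb : 0 ≤ b) (hl0 : 0 ≤ l) (hl1 : l ≤ 1) :
    ((1-l)*a + l*b) * Real.log ((1-l)*a + l*b) ≤ (1-l)*(a*Real.log a) + l*(b*Real.log b) := by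
  have := Real.convexOn_mul_log.2 (Set.mem_Ici.2 ha) (Set.mem_Ici.2 hb)
    (by linarith : (0:ℝ) ≤ 1 - l) hl0 (by ring)
  simpa using this

private lemma phi_zero_line {b : ℝ} (l : ℝ) (hl : 0 < l) :
    (l*b) * Real.log (l*b) = l*(b*Real.log b) + l*b*Real.log l := by
  rcases eq_or_ne b 0 with rfl | hb
  · simp
  · rw [Real.log_mul hl.ne' hb]; ring

private lemma phi_tangent {a b : ℝ} (ha : 0 < a) (hb : 0 ≤ b) :
    a*Real.log a + (Real.log a + 1)*(b-a) ≤ b*Real.log b := by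
  rcases eq_or_lt_of_le hb with rfl | hb
  · simp; nlinarith [ha]
  · have h1 : Real.log (a/b) ≤ a/b - 1 := Real.log_le_sub_one_of_pos (div_pos ha hb)
    rw [Real.log_div ha.ne' hb.ne'] at h1
    have h2 : b * (Real.log a - Real.log b) ≤ b * (a/b - 1) :=
      mul_le_mul_of_nonneg_left h1 hb.le
    have h3 : b * (a/b) = a := by field_simp
    nlinarith [h2]

private lemma deltaP_mix [Fintype T] [Fintype X] [Fintype Y] {P Q1 Q2 : T → X → Y → ℝ}
    (h1 : Q1 ∈ deltaP P) (h2 : Q2 ∈ deltaP P) {l : ℝ} (hl0 : 0 ≤ l) (hl1 : l ≤ 1) :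
    (fun a b c => (1-l) * Q1 a b c + l * Q2 a b c) ∈ deltaP P := by
  obtain ⟨⟨n1, s1⟩, tx1, ty1⟩ := h1
  obtain ⟨⟨n2, s2⟩, tx2, ty2⟩ := h2
  refine ⟨⟨fun a b c => add_nonneg (mul_nonneg (by linarith) (n1 a b c))
      (mul_nonneg hl0 (n2 a b c)), ?_⟩, ?_, ?_⟩
  · simp only [Finset.sum_add_distrib, ← Finset.mul_sum]
    rw [s1, s2]; ring
  · intro a b
    have h : margTX (fun a b c => (1-l)*Q1 a b c + l*Q2 a b c) a b
        = (1-l) * margTX Q1 a b + l * margTX Q2 a b := by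
      simp [margTX, Finset.sum_add_distrib, Finset.mul_sum]
    rw [h, tx1, tx2]; ring
  · intro a c
    have h : margTY (fun a b c => (1-l)*Q1 a b c + l*Q2 a b c) a c
        = (1-l) * margTY Q1 a c + l * margTY Q2 a c := by
      simp [margTY, Finset.sum_add_distrib, Finset.mul_sum]
    rw [h, ty1, ty2]; ring

theorem minimizer_support_square [Fintype T] [Fintype X] [Fintype Y]
    (P Qs : T → X → Y → ℝ) (hP : IsDist P)
    (hQs : Qs ∈ deltaP P) (hmin : ∀ Q ∈ deltaP P, CMI Qs ≤ CMI Q)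
    (t : T) (x : X) (y : Y) (hsupp : ∃ Q ∈ deltaP P, Q t x y ≠ 0)
    (h0 : Qs t x y = 0) :
    margXY Qs x y = 0 ∧ ∀ t' : T, Qs t' x y = 0 := by
  have hnnS : ∀ a b c, 0 ≤ Qs a b c := hQs.1.1
  have hXY0 : margXY Qs x y = 0 := by
    by_contra hm
    have hmpos : 0 < margXY Qs x y :=
      lt_of_le_of_ne (Finset.sum_nonneg fun a _ => hnnS a x y) (Ne.symm hm)
    obtain ⟨Q, hQ, hQt⟩ := hsupp
    have hnnQ : ∀ a b c, 0 ≤ Q a b c := hQ.1.1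
    have hd : 0 < Q t x y := lt_of_le_of_ne (hnnQ t x y) (Ne.symm hQt)
    have hnnMS : ∀ b c, 0 ≤ margXY Qs b c :=
      fun b c => Finset.sum_nonneg fun a _ => hnnS a b c
    have hnnMQ : ∀ b c, 0 ≤ margXY Q b c :=
      fun b c => Finset.sum_nonneg fun a _ => hnnQ a b c
    -- notation
    set SφS := ∑ a, ∑ b, ∑ c, Qs a b c * Real.log (Qs a b c) with hSφS
    set SφQ := ∑ a, ∑ b, ∑ c, Q a b c * Real.log (Q a b c) with hSφQ
    set MS := ∑ b, ∑ c, margXY Qs b c * Real.log (margXY Qs b c) with hMS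
    set ψ : X → Y → ℝ := fun b c =>
      if margXY Qs b c = 0 then margXY Q b c * Real.log (margXY Q b c)
      else (Real.log (margXY Qs b c) + 1) * (margXY Q b c - margXY Qs b c) with hψ
    set K := SφQ - SφS - ∑ b, ∑ c, ψ b c with hK
    set l := min (1/2 : ℝ) (Real.exp (-(K+1)/(Q t x y))) with hl
    have hl0 : 0 < l := lt_min (by norm_num) (Real.exp_pos _)
    have hl1 : l < 1 := lt_of_le_of_lt (min_le_left _ _) (by norm_num)
    have hlogneg : Real.log l < 0 := Real.log_neg hl0 hl1
    have hlK : Real.log l ≤ -(K+1)/(Q t x y) :=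
      (Real.log_le_iff_le_exp hl0).2 (min_le_right _ _)
    set Qk : T → X → Y → ℝ := fun a b c => (1-l) * Qs a b c + l * Q a b c with hQk
    have hQkD : Qk ∈ deltaP P := deltaP_mix hQs hQ hl0.le hl1.le
    have hmXYk : ∀ b c, margXY Qk b c = (1-l) * margXY Qs b c + l * margXY Q b c := by
      intro b c; simp [hQk, margXY, Finset.sum_add_distrib, Finset.mul_sum]
    -- F-inequality from minimality
    have hCMI := hmin Qk hQkD
    rw [CMI_eq' P Qs hQs, CMI_eq' P Qk hQkD] at hCMI
    set Sk := ∑ a, ∑ b, ∑ c, Qk a b c * Real.log (Qk a b c) with hSk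
    set Mk := ∑ b, ∑ c, margXY Qk b c * Real.log (margXY Qk b c) with hMk
    have hF : SφS - MS ≤ Sk - Mk := by linarith
    -- e functions
    set e : T → X → Y → ℝ := fun a b c => if Qs a b c = 0 then Q a b c else 0 with he
    set e' : X → Y → ℝ := fun b c => if margXY Qs b c = 0 then margXY Q b c else 0 with he'
    have hnne : ∀ a b c, 0 ≤ e a b c := by
      intro a b c; simp only [he]; split
      · exact hnnQ a b c
      · exact le_refl 0
    -- Part 1
    have part1 : Sk ≤ (1-l)*SφS + l*SφQ + (l*Real.log l) * (∑ a, ∑ b, ∑ c, e a b c) := by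
      have ptw : ∀ a b c, Qk a b c * Real.log (Qk a b c)
          ≤ (1-l)*(Qs a b c * Real.log (Qs a b c)) + l*(Q a b c * Real.log (Q a b c))
            + (l*Real.log l) * e a b c := by
        intro a b c
        rcases eq_or_ne (Qs a b c) 0 with h | h
        · have hQkv : Qk a b c = l * Q a b c := by simp [hQk, h]
          rw [hQkv, phi_zero_line l hl0, h]
          simp only [he, if_pos h]
          ring_nf
          exact le_refl _
        · have := phi_cvx (hnnS a b c) (hnnQ a b c) hl0.le hl1.le
          simp only [he, if_neg h, mul_zero, add_zero]
          exact this
      calc Sk ≤ ∑ a, ∑ b, ∑ c, ((1-l)*(Qs a b c * Real.log (Qs a b c))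
            + l*(Q a b c * Real.log (Q a b c)) + (l*Real.log l) * e a b c) := by
            refine Finset.sum_le_sum fun a _ => ?_
            refine Finset.sum_le_sum fun b _ => ?_
            exact Finset.sum_le_sum fun c _ => ptw a b c
        _ = (1-l)*SφS + l*SφQ + (l*Real.log l) * (∑ a, ∑ b, ∑ c, e a b c) := by
            simp only [Finset.sum_add_distrib, ← Finset.mul_sum]
            rw [hSφS, hSφQ]
    -- Part 2
    have part2 : MS + l * (∑ b, ∑ c, ψ b c) + (l*Real.log l) * (∑ b, ∑ c, e' b c) ≤ Mk := by
      have ptw : ∀ b c, margXY Qs b c * Real.log (margXY Qs b c) + l * ψ b c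
          + (l*Real.log l) * e' b c ≤ margXY Qk b c * Real.log (margXY Qk b c) := by
        intro b c
        rw [hmXYk b c]
        rcases eq_or_ne (margXY Qs b c) 0 with h | h
        · rw [h]
          simp only [hψ, he', if_pos h]
          rw [show (1-l)*(0:ℝ) + l * margXY Q b c = l * margXY Q b c by ring,
            phi_zero_line l hl0]
          ring_nf
          exact le_refl _
        · have hpos : 0 < margXY Qs b c := lt_of_le_of_ne (hnnMS b c) (Ne.symm h)
          have harg : 0 ≤ (1-l) * margXY Qs b c + l * margXY Q b c := by
            have := hnnMQ b c; nlinarith [hnnMS b c, hl0.le, hl1.le]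
          have htan := phi_tangent hpos harg
          simp only [hψ, he', if_neg h, mul_zero, add_zero]
          calc margXY Qs b c * Real.log (margXY Qs b c)
              + l * ((Real.log (margXY Qs b c) + 1) * (margXY Q b c - margXY Qs b c))
              = margXY Qs b c * Real.log (margXY Qs b c)
                + (Real.log (margXY Qs b c) + 1)
                  * (((1-l) * margXY Qs b c + l * margXY Q b c) - margXY Qs b c) := by ring
            _ ≤ _ := htan
      calc MS + l * (∑ b, ∑ c, ψ b c) + (l*Real.log l) * (∑ b, ∑ c, e' b c)
          = ∑ b, ∑ c, (margXY Qs b c * Real.log (margXY Qs b c) + l * ψ b c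
            + (l*Real.log l) * e' b c) := by
            simp only [Finset.sum_add_distrib, ← Finset.mul_sum]
            rw [hMS]
        _ ≤ Mk := by
            refine Finset.sum_le_sum fun b _ => ?_
            exact Finset.sum_le_sum fun c _ => ptw b c
    -- Part 3 : E - E' ≥ d
    have hEE : Q t x y ≤ (∑ a, ∑ b, ∑ c, e a b c) - (∑ b, ∑ c, e' b c) := by
      have hswap : (∑ a, ∑ b, ∑ c, e a b c) = ∑ b, ∑ c, ∑ a, e a b c := by
        rw [Finset.sum_comm]
        exact Finset.sum_congr rfl fun b _ => Finset.sum_comm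
      rw [hswap, ← Finset.sum_sub_distrib]
      simp only [← Finset.sum_sub_distrib]
      have hblk0 : ∀ b c, 0 ≤ (∑ a, e a b c) - e' b c := by
        intro b c
        rcases eq_or_ne (margXY Qs b c) 0 with h | h
        · have hz : ∀ a, Qs a b c = 0 := by
            intro a
            have := (Finset.sum_eq_zero_iff_of_nonneg
              (fun a _ => hnnS a b c)).1 h a (Finset.mem_univ a)
            exact this
          have : (∑ a, e a b c) = margXY Q b c := by
            rw [margXY]
            exact Finset.sum_congr rfl fun a _ => by simp [he, hz a]
          rw [this]
          simp [he', if_pos h]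
        · have : e' b c = 0 := by simp [he', if_neg h]
          rw [this, sub_zero]
          exact Finset.sum_nonneg fun a _ => hnne a b c
      have hblkxy : Q t x y ≤ (∑ a, e a x y) - e' x y := by
        have h1 : e' x y = 0 := by simp [he', if_neg hm]
        have h2 : Q t x y ≤ ∑ a, e a x y := by
          have : e t x y = Q t x y := by simp [he, if_pos h0]
          rw [← this]
          exact Finset.single_le_sum (fun a _ => hnne a x y) (Finset.mem_univ t)
        rw [h1, sub_zero]; exact h2
      calc Q t x y ≤ (∑ a, e a x y) - e' x y := hblkxy
        _ ≤ ∑ c, ((∑ a, e a x c) - e' x c) :=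
            Finset.single_le_sum (fun c _ => hblk0 x c) (Finset.mem_univ y)
        _ ≤ ∑ b, ∑ c, ((∑ a, e a b c) - e' b c) :=
            Finset.single_le_sum
              (fun b _ => Finset.sum_nonneg fun c _ => hblk0 b c) (Finset.mem_univ x)
    -- combine
    have hll : l * Real.log l < 0 := mul_neg_of_pos_of_neg hl0 hlogneg
    have part3 : (l*Real.log l) * ((∑ a, ∑ b, ∑ c, e a b c) - (∑ b, ∑ c, e' b c))
        ≤ (l*Real.log l) * (Q t x y) := mul_le_mul_of_nonpos_left hEE hll.le
    have hfinal : Sk - Mk ≤ (SφS - MS) + l*K + (l*Real.log l) * (Q t x y) := by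
      have expand : (1-l)*SφS + l*SφQ + (l*Real.log l) * (∑ a, ∑ b, ∑ c, e a b c)
          - (MS + l * (∑ b, ∑ c, ψ b c) + (l*Real.log l) * (∑ b, ∑ c, e' b c))
          = (SφS - MS) + l*K
            + (l*Real.log l) * ((∑ a, ∑ b, ∑ c, e a b c) - (∑ b, ∑ c, e' b c)) := by
        rw [hK]; ring
      linarith [part1, part2, part3]
    have hlast : l*K + (l*Real.log l) * (Q t x y) ≤ -l := by
      have h1 : (l * (Q t x y)) * Real.log l ≤ (l * (Q t x y)) * (-(K+1)/(Q t x y)) :=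
        mul_le_mul_of_nonneg_left hlK (by positivity)
      have h2 : (l * (Q t x y)) * (-(K+1)/(Q t x y)) = -l*(K+1) := by
        field_simp
      nlinarith [h1]
    linarith [hF, hfinal, hlast, hl0]
  refine ⟨hXY0, fun t' => ?_⟩
  exact (Finset.sum_eq_zero_iff_of_nonneg (fun a _ => hnnS a x y)).1 hXY0 t' (Finset.mem_univ t')
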